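/- Suppose ρ : ℕ⁺ → K is a weight function and f(x) ∈ K[[x]] with f(0) = 1 satisfies 1 + Σ_{n≥1} (Σ_{F ∈ PF(n)} ∏_{v ∈ F} ρ(h_v)) x^n = f(x), where PF(n) is the set of plane forests with n vertices. Then for all n ≥ 1 with [x^{n-1}]f(x) ≠ 0, ρ(n) = −[x^n](f(x)^{-1}) / [x^{n-1}]f(x). -/

import Mathlib

/-- Plane trees: nonempty rooted trees whose subtrees at each vertex are linearly ordered. -/
inductive PTree : Type
  | node : List PTree → PTree

namespace PTree

mutual
/-- The number of vertices of a plane tree. -/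
def size : PTree → ℕ
  | .node cs => sizeList cs + 1
/-- The total number of vertices of a plane forest (a list of plane trees). -/
def sizeList : List PTree → ℕ
  | [] => 0
  | t :: ts => size t + sizeList ts
end

mutual
/-- The multiset of hook lengths of a plane tree: the hook length of a vertex
is the number of its descendants, counting the vertex itself. -/
def hooks : PTree → Multiset ℕ+
  | .node cs => ⟨sizeList cs + 1, Nat.succ_pos _⟩ ::ₘ hooksList cs
/-- The multiset of hook lengths of a plane forest. -/
def hooksList : List PTree → Multiset ℕ+
  | [] => 0
  | t :: ts => hooks t + hooksList ts
end

end PTree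

namespace PTreeAux

open PTree

@[simp] lemma size_node (cs : List PTree) : size (.node cs) = sizeList cs + 1 := by rw [size]
@[simp] lemma sizeList_nil : sizeList [] = 0 := by rw [sizeList]
@[simp] lemma sizeList_cons (t : PTree) (ts : List PTree) :
    sizeList (t :: ts) = size t + sizeList ts := by rw [sizeList]
@[simp] lemma hooks_node (cs : List PTree) :
    hooks (.node cs) = ⟨sizeList cs + 1, Nat.succ_pos _⟩ ::ₘ hooksList cs := by rw [hooks]
@[simp] lemma hooksList_nil : hooksList [] = 0 := by rw [hooksList]
@[simp] lemma hooksList_cons (t : PTree) (ts : List PTree) :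
    hooksList (t :: ts) = hooks t + hooksList ts := by rw [hooksList]

lemma size_pos (t : PTree) : 0 < size t := by cases t; simp

lemma eq_nil_of_sizeList_eq_zero {l : List PTree} (h : sizeList l = 0) : l = [] := by
  cases l with
  | nil => rfl
  | cons t ts => have := size_pos t; simp at h; omega

/-- A nonempty forest decomposes as a root tree (with its children forest) and
the remaining forest. -/
def consEquiv (m : ℕ) :
    {l : List PTree // sizeList l = m + 1} ≃
      Σ j : Fin (m + 1), {cs : List PTree // sizeList cs = j} ×
        {ts : List PTree // sizeList ts = m - j} where
  toFun := fun x => match x with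
    | ⟨[], h⟩ => absurd h (by simp)
    | ⟨PTree.node cs :: ts, h⟩ =>
        ⟨⟨sizeList cs, by simp at h; omega⟩, ⟨cs, rfl⟩,
          ⟨ts, show sizeList ts = m - sizeList cs by simp at h; omega⟩⟩
  invFun := fun ⟨j, ⟨cs, hcs⟩, ⟨ts, hts⟩⟩ =>
    ⟨PTree.node cs :: ts, by have := j.2; simp [hcs, hts]; omega⟩
  left_inv := fun x => match x with
    | ⟨[], h⟩ => absurd h (by simp)
    | ⟨PTree.node cs :: ts, h⟩ => rfl
  right_inv := fun ⟨⟨j, hj⟩, ⟨cs, hcs⟩, ⟨ts, hts⟩⟩ => by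
    simp only [Fin.val_mk] at hcs hts
    subst hcs
    rfl

theorem finite_forests : ∀ n : ℕ, Finite {l : List PTree // sizeList l = n} := by
  intro n
  induction n using Nat.strong_induction_on with
  | _ n ih =>
    match n with
    | 0 =>
      have : Subsingleton {l : List PTree // sizeList l = 0} :=
        ⟨fun a b => Subtype.ext (by rw [eq_nil_of_sizeList_eq_zero a.2,
          eq_nil_of_sizeList_eq_zero b.2])⟩
      exact Finite.of_subsingleton
    | m + 1 =>
      haveI : ∀ j : Fin (m + 1), Finite {cs : List PTree // sizeList cs = j} :=
        fun j => ih j (by omega)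
      haveI : ∀ j : Fin (m + 1), Finite {ts : List PTree // sizeList ts = m - j} :=
        fun j => ih (m - j) (by omega)
      exact Finite.of_equiv _ (consEquiv m).symm

section Weights

variable {K : Type*} [Field K] (ρ : ℕ+ → K)

/-- Total weight of forests with `n` vertices. -/
noncomputable def Fw (n : ℕ) : K :=
  ∑ᶠ F : {l : List PTree // PTree.sizeList l = n},
    (PTree.hooksList (F : List PTree) |>.map fun h => ρ h).prod

lemma Fw_zero : Fw ρ 0 = 1 := by
  letI : Unique {l : List PTree // PTree.sizeList l = 0} :=
    ⟨⟨⟨[], rfl⟩⟩, fun a => Subtype.ext (eq_nil_of_sizeList_eq_zero a.2)⟩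
  rw [Fw, finsum_unique]
  show ((PTree.hooksList ([] : List PTree)).map fun h => ρ h).prod = 1
  simp

lemma consEquiv_symm_apply (m : ℕ) (j : Fin (m + 1))
    (cs : {cs : List PTree // sizeList cs = j})
    (ts : {ts : List PTree // sizeList ts = m - j}) :
    (((consEquiv m).symm ⟨j, cs, ts⟩ : {l : List PTree // sizeList l = m + 1})
      : List PTree) = PTree.node cs :: ts := rfl

lemma Fw_succ (m : ℕ) :
    Fw ρ (m + 1) = ∑ j ∈ Finset.range (m + 1),
      ρ ⟨j + 1, Nat.succ_pos j⟩ * Fw ρ j * Fw ρ (m - j) := by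
  classical
  haveI := finite_forests
  haveI I : ∀ k : ℕ, Fintype {l : List PTree // sizeList l = k} :=
    fun k => Fintype.ofFinite _
  rw [Fw, finsum_eq_sum_of_fintype, ← Equiv.sum_comp (consEquiv m).symm,
    ← Finset.univ_sigma_univ, Finset.sum_sigma, ← Fin.sum_univ_eq_sum_range]
  refine Fintype.sum_congr _ _ fun j => ?_
  have step1 : ∀ p : {cs : List PTree // sizeList cs = j} ×
      {ts : List PTree // sizeList ts = m - j},
      ((PTree.hooksList (((consEquiv m).symm ⟨j, p.1, p.2⟩ : _) : List PTree)).map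
          fun h => ρ h).prod
        = ρ ⟨(j : ℕ) + 1, Nat.succ_pos _⟩ *
          (((PTree.hooksList (p.1 : List PTree)).map fun h => ρ h).prod *
           ((PTree.hooksList (p.2 : List PTree)).map fun h => ρ h).prod) := by
    rintro ⟨⟨cs, hcs⟩, ⟨ts, hts⟩⟩
    rw [consEquiv_symm_apply]
    simp only [hooksList_cons, hooks_node, Multiset.map_add, Multiset.map_cons,
      Multiset.prod_add, Multiset.prod_cons, hcs]
    erw [Multiset.map_cons, Multiset.prod_cons]
    ring
  calc (∑ p : {cs : List PTree // sizeList cs = j} ×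
          {ts : List PTree // sizeList ts = m - j},
        ((PTree.hooksList (((consEquiv m).symm ⟨j, p.1, p.2⟩ : _) : List PTree)).map
          fun h => ρ h).prod)
      = ∑ p : {cs : List PTree // sizeList cs = j} ×
          {ts : List PTree // sizeList ts = m - j},
          ρ ⟨(j : ℕ) + 1, Nat.succ_pos _⟩ *
          (((PTree.hooksList (p.1 : List PTree)).map fun h => ρ h).prod *
           ((PTree.hooksList (p.2 : List PTree)).map fun h => ρ h).prod) :=
        Fintype.sum_congr _ _ step1
    _ = ρ ⟨(j : ℕ) + 1, Nat.succ_pos _⟩ * Fw ρ (j : ℕ) * Fw ρ (m - (j : ℕ)) := by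
        rw [← Finset.mul_sum, Fw, Fw, finsum_eq_sum_of_fintype, finsum_eq_sum_of_fintype,
          Fintype.sum_prod_type, mul_assoc, Fintype.sum_mul_sum]

end Weights

end PTreeAux

/-- The expansion formula for plane forests. -/
theorem expansion_formula_plane_forests {K : Type*} [Field K] (ρ : ℕ+ → K)
    (f : PowerSeries K) (h0 : PowerSeries.constantCoeff f = 1)
    (hf : ∀ n : ℕ, 1 ≤ n → PowerSeries.coeff n f =
      ∑ᶠ F : {l : List PTree // PTree.sizeList l = n},
        (PTree.hooksList (F : List PTree) |>.map fun h => ρ h).prod)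
    (n : ℕ+) (hne : PowerSeries.coeff ((n : ℕ) - 1) f ≠ 0) :
    ρ n = -(PowerSeries.coeff (n : ℕ) f⁻¹) / PowerSeries.coeff ((n : ℕ) - 1) f := by
  classical
  set F : ℕ → K := PTreeAux.Fw ρ with hF
  have hcf : ∀ k : ℕ, PowerSeries.coeff k f = F k := by
    intro k
    cases k with
    | zero => rw [PowerSeries.coeff_zero_eq_constantCoeff, h0, hF, PTreeAux.Fw_zero]
    | succ k => rw [hf (k + 1) (by omega)]; rfl
  set r : ℕ → K := fun k => if h : 0 < k then ρ ⟨k, h⟩ else 0 with hr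
  set g : PowerSeries K := PowerSeries.mk fun k => if k = 0 then 1 else -(r k * F (k - 1))
    with hg
  have hfg : f * g = 1 := by
    ext m
    rw [PowerSeries.coeff_mul]
    cases m with
    | zero =>
      simp [hg, PowerSeries.coeff_mk, hcf 0, hF, PTreeAux.Fw_zero]
    | succ m =>
      rw [Finset.Nat.sum_antidiagonal_eq_sum_range_succ_mk]
      dsimp only
      rw [Finset.sum_range_succ, Nat.sub_self]
      have h1 : ∀ i ∈ Finset.range (m + 1),
          PowerSeries.coeff i f * PowerSeries.coeff (m + 1 - i) g
            = -(F i * (r (m + 1 - i) * F (m - i))) := by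
        intro i hi
        rw [Finset.mem_range] at hi
        rw [hcf i, hg, PowerSeries.coeff_mk, if_neg (by omega)]
        have : m + 1 - i - 1 = m - i := by omega
        rw [this]
        ring
      rw [Finset.sum_congr rfl h1]
      have h2 : PowerSeries.coeff (m + 1) f * PowerSeries.coeff 0 g = F (m + 1) := by
        rw [hcf, hg, PowerSeries.coeff_mk, if_pos rfl, mul_one]
      rw [h2]
      have h3 : (∑ i ∈ Finset.range (m + 1), -(F i * (r (m + 1 - i) * F (m - i))))
          = -F (m + 1) := by
        rw [Finset.sum_neg_distrib]
        congr 1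
        rw [← Finset.sum_range_reflect (fun i => F i * (r (m + 1 - i) * F (m - i))) (m + 1),
          show F (m + 1) = ∑ j ∈ Finset.range (m + 1),
            ρ ⟨j + 1, Nat.succ_pos j⟩ * F j * F (m - j) from PTreeAux.Fw_succ ρ m]
        refine Finset.sum_congr rfl fun j hj => ?_
        rw [Finset.mem_range] at hj
        have e1 : m + 1 - 1 - j = m - j := by omega
        have e2 : m + 1 - (m - j) = j + 1 := by omega
        have e3 : m - (m - j) = j := by omega
        simp only [e1, e2, e3, hr]
        rw [dif_pos (Nat.succ_pos j)]
        ring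
      rw [h3]
      simp
  have hconst : PowerSeries.constantCoeff f ≠ 0 := by rw [h0]; exact one_ne_zero
  have hinv : f⁻¹ = g :=
    (PowerSeries.inv_eq_iff_mul_eq_one hconst).mpr (by rw [mul_comm]; exact hfg)
  have hn0 : (n : ℕ) ≠ 0 := n.pos.ne'
  have hcg : PowerSeries.coeff (n : ℕ) f⁻¹ = -(ρ n * F ((n : ℕ) - 1)) := by
    rw [hinv, hg, PowerSeries.coeff_mk, if_neg hn0, hr]
    simp only [dif_pos n.pos]
    congr
  have hFne : F ((n : ℕ) - 1) ≠ 0 := by rw [← hcf]; exact hne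
  rw [hcg, hcf ((n : ℕ) - 1)]
  field_simp
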